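/- Let g : ℝ^d → [0,∞) be measurable with ∫exp(−βg(θ))dθ < ∞ for every β > 0, and let α > 0. Then C(α) := 1 + ∫∫_{ℝ^d×ℝ^d} (1 + αg(θ) + α|r|²/2) e^{−1 − αg(θ) − α|r|²/2} dθ dr is finite, and for every probability density ρ on ℝ^d × ℝ^d one has ∫∫ ρ log⁻ρ dθdr ≤ α ∫∫ (g(θ) + |r|²/2) ρ dθdr + C(α), where log⁻x := max{−log x, 0} (with x log⁻x := 0 at x = 0) and both sides are valued in [0,∞]. (Key entropy estimate in the proof of Proposition B.1.) -/

import Mathlib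

open MeasureTheory
open scoped ENNReal

lemma gauss_int {E : Type*} [NormedAddCommGroup E] [InnerProductSpace ℝ E]
    [FiniteDimensional ℝ E] [MeasurableSpace E] [BorelSpace E] {b : ℝ} (hb : 0 < b) :
    Integrable (fun v : E => Real.exp (-b * ‖v‖ ^ 2)) := by
  have h := (GaussianFourier.integrable_cexp_neg_mul_sq_norm_add (V := E)
    (b := (b : ℂ)) (by simpa using hb) 0 0).norm
  refine h.congr (Filter.Eventually.of_forall fun v => ?_)
  simp [Complex.norm_exp]
  norm_cast
  exact Or.inl rfl

lemma entropy_ptwise {x V : ℝ} (hx : 0 ≤ x) (hV : 0 ≤ V) :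
    x * max (-Real.log x) 0 ≤ V * x + Real.exp (-1 - V) := by
  rcases eq_or_lt_of_le hx with h | hx
  · rw [← h]
    simp
    positivity
  rcases le_or_gt (-Real.log x) 0 with h | h
  · rw [max_eq_right h]
    simp
    positivity
  rw [max_eq_left h.le]
  set u := -Real.log x - V with hu
  have hlog : -Real.log x = u + V := by rw [hu]; ring
  have hxe : x = Real.exp (-u - V) := by
    rw [hu]
    rw [show -(-Real.log x - V) - V = Real.log x from by ring, Real.exp_log hx]
  rcases le_or_gt u 0 with h2 | h2
  · have : x * -Real.log x ≤ x * V := by nlinarith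
    nlinarith [Real.exp_pos (-1 - V)]
  · have key : u * Real.exp (-u) ≤ Real.exp (-1) := by
      have h1 : u ≤ Real.exp (u - 1) := by
        have := Real.add_one_le_exp (u - 1); linarith
      calc u * Real.exp (-u) ≤ Real.exp (u - 1) * Real.exp (-u) :=
            mul_le_mul_of_nonneg_right h1 (Real.exp_pos _).le
        _ = Real.exp (-1) := by rw [← Real.exp_add]; ring_nf
    have hxu : x * u ≤ Real.exp (-1 - V) := by
      rw [hxe, show -u - V = -u + -V from by ring, Real.exp_add]
      have e1 : Real.exp (-u) * Real.exp (-V) * u = u * Real.exp (-u) * Real.exp (-V) := by ring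
      rw [e1]
      calc u * Real.exp (-u) * Real.exp (-V) ≤ Real.exp (-1) * Real.exp (-V) :=
            mul_le_mul_of_nonneg_right key (Real.exp_pos _).le
        _ = Real.exp (-1 - V) := by rw [← Real.exp_add]; ring_nf
    have e2 : x * -Real.log x = x * u + V * x := by rw [hlog]; ring
    linarith

/-- key entropy estimate in Proposition B.1: for measurable
`g : ℝ^d → [0,∞)` with `∫exp(−βg) < ∞` for all `β > 0` and any `α > 0`, the constant
`C(α) = 1 + ∫∫(1 + αg(θ) + α|r|²/2)e^{−1−αg(θ)−α|r|²/2}dθdr` is finite, and every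
probability density `ρ` on `ℝ^d × ℝ^d` satisfies
`∫∫ρ log⁻ρ ≤ α∫∫(g(θ)+|r|²/2)ρ + C(α)` (both sides valued in `[0,∞]`). -/
theorem stmt_10 {d : ℕ} (g : EuclideanSpace ℝ (Fin d) → ℝ)
    (hg0 : ∀ θ, 0 ≤ g θ) (hgmeas : Measurable g)
    (hgint : ∀ β : ℝ, 0 < β → Integrable fun θ => Real.exp (-β * g θ))
    (α : ℝ) (hα : 0 < α) :
    (Integrable fun p : EuclideanSpace ℝ (Fin d) × EuclideanSpace ℝ (Fin d) =>
      (1 + α * g p.1 + α * (‖p.2‖ ^ 2 / 2)) *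
        Real.exp (-1 - α * g p.1 - α * (‖p.2‖ ^ 2 / 2))) ∧
    ∀ ρ : EuclideanSpace ℝ (Fin d) × EuclideanSpace ℝ (Fin d) → ℝ,
      Measurable ρ → 0 ≤ ρ → Integrable ρ → (∫ p, ρ p) = 1 →
      (∫⁻ p, ENNReal.ofReal (ρ p * max (-Real.log (ρ p)) 0))
        ≤ ENNReal.ofReal α *
            (∫⁻ p : EuclideanSpace ℝ (Fin d) × EuclideanSpace ℝ (Fin d),
              ENNReal.ofReal ((g p.1 + ‖p.2‖ ^ 2 / 2) * ρ p))
          + ENNReal.ofReal (1 + ∫ p : EuclideanSpace ℝ (Fin d) × EuclideanSpace ℝ (Fin d),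
              (1 + α * g p.1 + α * (‖p.2‖ ^ 2 / 2)) *
                Real.exp (-1 - α * g p.1 - α * (‖p.2‖ ^ 2 / 2))) := by
  set P := EuclideanSpace ℝ (Fin d) × EuclideanSpace ℝ (Fin d)
  set V : P → ℝ := fun p => α * g p.1 + α * (‖p.2‖ ^ 2 / 2) with hV
  have hV0 : ∀ p, 0 ≤ V p := fun p => by
    have := hg0 p.1
    have : (0:ℝ) ≤ ‖p.2‖ ^ 2 / 2 := by positivity
    positivity
  have hVmeas : Measurable V := by
    apply Measurable.add
    · exact (hgmeas.comp measurable_fst).const_mul α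
    · exact (((measurable_norm.comp measurable_snd).pow_const 2).div_const 2).const_mul α
  -- the majorant
  have hmaj : Integrable (fun p : P =>
      2 * (Real.exp (-(α/2) * g p.1) * Real.exp (-(α/4) * ‖p.2‖ ^ 2))) := by
    have h1 := hgint (α/2) (by linarith)
    have h2 : Integrable (fun r : EuclideanSpace ℝ (Fin d) =>
        Real.exp (-(α/4) * ‖r‖ ^ 2)) := gauss_int (by linarith)
    exact (h1.mul_prod h2).const_mul 2
  have hbound : ∀ p : P, (1 + V p) * Real.exp (-1 - V p)
      ≤ 2 * (Real.exp (-(α/2) * g p.1) * Real.exp (-(α/4) * ‖p.2‖ ^ 2)) := by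
    intro p
    have ht := hV0 p
    set t := V p with htt
    have e1 : Real.exp (-(α/2) * g p.1) * Real.exp (-(α/4) * ‖p.2‖ ^ 2)
        = Real.exp (-(t/2)) := by
      rw [← Real.exp_add]
      congr 1
      rw [htt, hV]
      ring
    rw [e1]
    have h1 : t/2 + 1 ≤ Real.exp (t/2) := Real.add_one_le_exp (t/2)
    have h2 : Real.exp (-1 - t) ≤ Real.exp (-t) :=
      Real.exp_le_exp.mpr (by linarith)
    have h3 : Real.exp (t/2) * Real.exp (-t) = Real.exp (-(t/2)) := by
      rw [← Real.exp_add]; ring_nf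
    calc (1 + t) * Real.exp (-1 - t) ≤ (1 + t) * Real.exp (-t) :=
          mul_le_mul_of_nonneg_left h2 (by linarith)
      _ ≤ (2 * Real.exp (t/2)) * Real.exp (-t) := by
          apply mul_le_mul_of_nonneg_right _ (Real.exp_pos _).le
          linarith
      _ = 2 * Real.exp (-(t/2)) := by rw [mul_assoc, h3]
  have hCpos : ∀ p : P, 0 ≤ (1 + V p) * Real.exp (-1 - V p) := fun p => by
    have := hV0 p
    positivity
  have hFmeas : Measurable (fun p : P => (1 + V p) * Real.exp (-1 - V p)) := by
    apply Measurable.mul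
    · exact measurable_const.add hVmeas
    · exact ((measurable_const.sub hVmeas)).exp
  have hFeq : (fun p : P => (1 + α * g p.1 + α * (‖p.2‖ ^ 2 / 2)) *
      Real.exp (-1 - α * g p.1 - α * (‖p.2‖ ^ 2 / 2)))
      = fun p : P => (1 + V p) * Real.exp (-1 - V p) := by
    funext p
    rw [hV]
    ring_nf
  have hCint : Integrable (fun p : P => (1 + V p) * Real.exp (-1 - V p)) := by
    apply hmaj.mono' hFmeas.aestronglyMeasurable
    filter_upwards with p
    rw [Real.norm_eq_abs, abs_of_nonneg (hCpos p)]
    exact hbound p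
  refine ⟨hFeq ▸ hCint, ?_⟩
  intro ρ hρmeas hρ0 hρint hρ1
  -- integrability of exp(-1-V)
  have he_meas : Measurable (fun p : P => Real.exp (-1 - V p)) :=
    (measurable_const.sub hVmeas).exp
  have he_le : ∀ p : P, Real.exp (-1 - V p) ≤ (1 + V p) * Real.exp (-1 - V p) := by
    intro p
    have := hV0 p
    nlinarith [Real.exp_pos (-1 - V p)]
  have he_int : Integrable (fun p : P => Real.exp (-1 - V p)) := by
    apply hCint.mono' he_meas.aestronglyMeasurable
    filter_upwards with p
    rw [Real.norm_eq_abs, abs_of_nonneg (Real.exp_pos _).le]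
    exact he_le p
  -- pointwise entropy bound, split
  have step1 : (∫⁻ p, ENNReal.ofReal (ρ p * max (-Real.log (ρ p)) 0))
      ≤ ∫⁻ p : P, (ENNReal.ofReal (ENNReal.ofReal α *
          ENNReal.ofReal ((g p.1 + ‖p.2‖ ^ 2 / 2) * ρ p)).toReal
          + ENNReal.ofReal (Real.exp (-1 - V p))) := by
    apply lintegral_mono
    intro p
    have hent := entropy_ptwise (hρ0 p) (hV0 p)
    have hmul : V p * ρ p = α * ((g p.1 + ‖p.2‖ ^ 2 / 2) * ρ p) := by
      rw [hV]; ring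
    have hnn : 0 ≤ (g p.1 + ‖p.2‖ ^ 2 / 2) * ρ p :=
      mul_nonneg (add_nonneg (hg0 p.1) (by positivity)) (hρ0 p)
    have e3 : (ENNReal.ofReal α * ENNReal.ofReal ((g p.1 + ‖p.2‖ ^ 2 / 2) * ρ p)).toReal
        = V p * ρ p := by
      rw [← ENNReal.ofReal_mul hα.le, ENNReal.toReal_ofReal (by nlinarith), hmul]
    dsimp only
    rw [e3, ← ENNReal.ofReal_add (mul_nonneg (hV0 p) (hρ0 p)) (Real.exp_pos _).le]
    exact ENNReal.ofReal_le_ofReal hent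
  have step2 : (∫⁻ p : P, (ENNReal.ofReal (ENNReal.ofReal α *
          ENNReal.ofReal ((g p.1 + ‖p.2‖ ^ 2 / 2) * ρ p)).toReal
          + ENNReal.ofReal (Real.exp (-1 - V p))))
      = (∫⁻ p : P, ENNReal.ofReal α * ENNReal.ofReal ((g p.1 + ‖p.2‖ ^ 2 / 2) * ρ p))
        + ∫⁻ p : P, ENNReal.ofReal (Real.exp (-1 - V p)) := by
    have hofr : ∀ p : P, ENNReal.ofReal (ENNReal.ofReal α *
        ENNReal.ofReal ((g p.1 + ‖p.2‖ ^ 2 / 2) * ρ p)).toReal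
        = ENNReal.ofReal α * ENNReal.ofReal ((g p.1 + ‖p.2‖ ^ 2 / 2) * ρ p) := by
      intro p
      rw [ENNReal.ofReal_toReal]
      exact ENNReal.mul_ne_top ENNReal.ofReal_ne_top ENNReal.ofReal_ne_top
    simp_rw [hofr]
    apply lintegral_add_left
    apply Measurable.const_mul
    apply Measurable.ennreal_ofReal
    apply Measurable.mul _ hρmeas
    exact (hgmeas.comp measurable_fst).add
      (((measurable_norm.comp measurable_snd).pow_const 2).div_const 2)
  have step3 : (∫⁻ p : P, ENNReal.ofReal α * ENNReal.ofReal ((g p.1 + ‖p.2‖ ^ 2 / 2) * ρ p))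
      = ENNReal.ofReal α * ∫⁻ p : P, ENNReal.ofReal ((g p.1 + ‖p.2‖ ^ 2 / 2) * ρ p) :=
    lintegral_const_mul' _ _ ENNReal.ofReal_ne_top
  have step4 : (∫⁻ p : P, ENNReal.ofReal (Real.exp (-1 - V p)))
      ≤ ENNReal.ofReal (1 + ∫ p : P, (1 + α * g p.1 + α * (‖p.2‖ ^ 2 / 2)) *
          Real.exp (-1 - α * g p.1 - α * (‖p.2‖ ^ 2 / 2))) := by
    rw [← ofReal_integral_eq_lintegral_ofReal he_int
      (Filter.Eventually.of_forall fun p => (Real.exp_pos _).le)]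
    apply ENNReal.ofReal_le_ofReal
    rw [hFeq]
    have := integral_mono he_int hCint he_le
    have hnn : 0 ≤ ∫ p : P, (1 + V p) * Real.exp (-1 - V p) :=
      integral_nonneg hCpos
    linarith
  calc (∫⁻ p, ENNReal.ofReal (ρ p * max (-Real.log (ρ p)) 0))
      ≤ _ := step1
    _ = _ := step2
    _ ≤ _ := by
        rw [step3]
        exact add_le_add le_rfl step4
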